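/- For each nonnegative integer n, the function Ψₙ(x) = (2ⁿ n! μ √π)^{-1/2} exp(i(αx² + δx + κ) − (βx + ε)²/2) Hₙ(βx + ε), where Hₙ is the n-th Hermite polynomial and β > 0, μ > 0, satisfies E Ψₙ = λ(n + 1/2) Ψₙ, where E = (λ/2)[ (p − 2αx − δ)²/β² + (βx + ε)² ] with p = −i d/dx. -/

import Mathlib

open Complex

/-- Physicists' Hermite polynomials: `H₀ = 1`, `H₁ = 2x`,
`Hₙ₊₂ = 2x Hₙ₊₁ − 2(n+1) Hₙ`. -/
noncomputable def physHermite : ℕ → ℝ → ℝ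
  | 0 => fun _ => 1
  | 1 => fun x => 2 * x
  | (n + 2) => fun x => 2 * x * physHermite (n + 1) x - 2 * (n + 1) * physHermite n x

/-- Momentum operator `p = -i d/dx`. -/
noncomputable def momOp (ψ : ℝ → ℂ) : ℝ → ℂ := fun x => -Complex.I * deriv ψ x

/-- The first-order operator `A = p − 2αx − δ`. -/
noncomputable def linOp (α δ : ℝ) (ψ : ℝ → ℂ) : ℝ → ℂ := fun x =>
  momOp ψ x - 2 * α * x * ψ x - δ * ψ x

/-- The eigenfunctions `Ψₙ` of the quadratic invariant. -/
noncomputable def PsiN (α β δ ε κ μ : ℝ) (n : ℕ) : ℝ → ℂ := fun x =>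
  (Real.sqrt (2 ^ n * n.factorial * μ * Real.sqrt Real.pi) : ℂ)⁻¹
    * Complex.exp (Complex.I * ((α : ℂ) * x ^ 2 + (δ : ℂ) * x + κ)
        - ((β : ℂ) * x + ε) ^ 2 / 2)
    * (physHermite n (β * x + ε) : ℂ)

/-- The quadratic invariant `E = (λ/2)[(p − 2αx − δ)²/β² + (βx + ε)²]`. -/
noncomputable def Einv (α β δ ε lam : ℝ) (ψ : ℝ → ℂ) : ℝ → ℂ := fun x =>
  (lam / 2 : ℂ) * (linOp α δ (linOp α δ ψ) x / (β : ℂ) ^ 2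
    + ((β : ℂ) * x + ε) ^ 2 * ψ x)

/-- Derivative of the physicists' Hermite polynomials: `dPH n = Hₙ' = 2n Hₙ₋₁`. -/
noncomputable def dPH : ℕ → ℝ → ℝ
  | 0 => fun _ => 0
  | (n + 1) => fun x => 2 * (n + 1) * physHermite n x

lemma dPH_eq (n : ℕ) (x : ℝ) :
    dPH n x = 2 * x * physHermite n x - physHermite (n + 1) x := by
  cases n with
  | zero => simp [dPH, physHermite]
  | succ m =>
    show 2 * (m + 1 : ℝ) * physHermite m x
        = 2 * x * physHermite (m + 1) x - physHermite (m + 2) x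
    rw [show physHermite (m + 2) = fun x =>
      2 * x * physHermite (m + 1) x - 2 * (m + 1) * physHermite m x from rfl]
    ring

lemma hasDerivAt_PH (n : ℕ) (x : ℝ) : HasDerivAt (physHermite n) (dPH n x) x := by
  induction n using Nat.strong_induction_on with
  | _ n ih =>
    match n with
    | 0 => simpa [physHermite, dPH] using hasDerivAt_const x (1 : ℝ)
    | 1 =>
      have : HasDerivAt (fun y : ℝ => 2 * y) (2 * 1) x := (hasDerivAt_id x).const_mul 2
      simpa [physHermite, dPH] using this
    | (m + 2) =>
      have h1 := ih (m + 1) (by omega)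
      have h0 := ih m (by omega)
      have h : HasDerivAt (fun y : ℝ =>
          2 * y * physHermite (m + 1) y - 2 * (m + 1) * physHermite m y)
          (2 * 1 * physHermite (m + 1) x + 2 * x * dPH (m + 1) x
            - 2 * (m + 1) * dPH m x) x :=
        (((hasDerivAt_id x).const_mul 2).mul h1).sub (h0.const_mul _)
      have hfun : physHermite (m + 2) = fun y : ℝ =>
          2 * y * physHermite (m + 1) y - 2 * (m + 1) * physHermite m y := rfl
      rw [hfun]
      convert h using 1
      have e2 : dPH (m + 2) x = 2 * ((m + 1 : ℕ) + 1 : ℝ) * physHermite (m + 1) x := rfl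
      have e1 : dPH (m + 1) x = 2 * ((m : ℝ) + 1) * physHermite m x := rfl
      rw [e2, e1, dPH_eq m x]
      push_cast
      ring

lemma hasDerivAt_dPH (n : ℕ) (x : ℝ) :
    HasDerivAt (dPH n) (2 * x * dPH n x - 2 * n * physHermite n x) x := by
  cases n with
  | zero => simpa [dPH] using hasDerivAt_const x (0 : ℝ)
  | succ m =>
    have h : HasDerivAt (fun y : ℝ => 2 * ((m : ℝ) + 1) * physHermite m y)
        (2 * ((m : ℝ) + 1) * dPH m x) x := (hasDerivAt_PH m x).const_mul _
    have hfun : dPH (m + 1) = fun y : ℝ => 2 * ((m : ℝ) + 1) * physHermite m y := rfl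
    rw [hfun]
    convert h using 1
    rw [dPH_eq m x]
    push_cast
    ring

/-- The gaussian-phase exponent. -/
noncomputable def Gf (α β δ ε κ : ℝ) : ℝ → ℂ := fun x =>
  Complex.I * ((α : ℂ) * x ^ 2 + (δ : ℂ) * x + κ) - ((β : ℂ) * x + ε) ^ 2 / 2

lemma hasDerivAt_Gf (α β δ ε κ : ℝ) (x : ℝ) :
    HasDerivAt (Gf α β δ ε κ)
      (Complex.I * (2 * α * x + δ) - β * ((β : ℂ) * x + ε)) x := by
  have hx : HasDerivAt (fun y : ℝ => (y : ℂ)) 1 x := by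
    simpa using (hasDerivAt_id x).ofReal_comp
  have hGfun : Gf α β δ ε κ = fun y : ℝ =>
      Complex.I * ((α : ℂ) * ((y : ℂ) * (y : ℂ)) + (δ : ℂ) * y + (κ : ℂ))
        - ((β : ℂ) * y + (ε : ℂ)) * ((β : ℂ) * y + (ε : ℂ)) / 2 := by
    funext y
    simp only [Gf]
    ring
  rw [hGfun]
  have hu : HasDerivAt (fun y : ℝ => (β : ℂ) * y + (ε : ℂ)) ((β : ℂ) * 1) x :=
    (hx.const_mul (β : ℂ)).add_const (ε : ℂ)
  have h1 := ((((hx.mul hx).const_mul (α : ℂ)).add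
    (hx.const_mul (δ : ℂ))).add_const (κ : ℂ)).const_mul Complex.I
  have h2 := (hu.mul hu).div_const (2 : ℂ)
  convert h1.sub h2 using 1
  · rfl
  · rfl
  push_cast
  ring

lemma lin_eval (α β δ ε κ : ℝ) (C : ℂ) (F : ℝ → ℂ) (F' : ℂ) (x : ℝ)
    (hF : HasDerivAt F F' x) :
    linOp α δ (fun y => C * Complex.exp (Gf α β δ ε κ y) * F y) x
      = C * Complex.exp (Gf α β δ ε κ x)
        * (Complex.I * β * ((β : ℂ) * x + ε) * F x - Complex.I * F') := by
  have hG := hasDerivAt_Gf α β δ ε κ x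
  have hψ : HasDerivAt (fun y => C * Complex.exp (Gf α β δ ε κ y) * F y)
      ((C * (Complex.exp (Gf α β δ ε κ x)
          * (Complex.I * (2 * α * x + δ) - β * ((β : ℂ) * x + ε)))) * F x
        + (C * Complex.exp (Gf α β δ ε κ x)) * F') x :=
    ((hG.cexp.const_mul C).mul hF)
  simp only [linOp, momOp, hψ.deriv]
  have hI : (Complex.I) ^ 2 = -1 := Complex.I_sq
  set E := Complex.exp (Gf α β δ ε κ x)
  linear_combination (-(2 * (α : ℂ) * x + δ) * C * E * F x) * hI

/-- `E Ψₙ = λ(n + 1/2) Ψₙ`. -/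
theorem invariant_eigenvalue (α β δ ε κ μ lam : ℝ) (hβ : 0 < β) (hμ : 0 < μ)
    (n : ℕ) (x : ℝ) :
    Einv α β δ ε lam (PsiN α β δ ε κ μ n) x
      = (lam : ℂ) * ((n : ℂ) + 1 / 2) * PsiN α β δ ε κ μ n x := by
  set C : ℂ := (Real.sqrt (2 ^ n * n.factorial * μ * Real.sqrt Real.pi) : ℂ)⁻¹ with hC
  have hx : ∀ z : ℝ, HasDerivAt (fun y : ℝ => (y : ℂ)) 1 z := fun z => by
    simpa using (hasDerivAt_id z).ofReal_comp
  -- complex-valued Hermite and its derivative along x ↦ βx+ε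
  set Hc : ℝ → ℂ := fun y => ((physHermite n (β * y + ε) : ℝ) : ℂ) with hHcdef
  set dHc : ℝ → ℂ := fun y => ((dPH n (β * y + ε) : ℝ) : ℂ) with hdHcdef
  have hHc : ∀ z : ℝ, HasDerivAt Hc ((β : ℂ) * dHc z) z := by
    intro z
    have ha : HasDerivAt (fun y : ℝ => β * y + ε) β z := by
      simpa using ((hasDerivAt_id z).const_mul β).add_const ε
    have := ((hasDerivAt_PH n (β * z + ε)).comp z ha).ofReal_comp
    simpa [Hc, dHc, mul_comm] using this
  have hdHc : ∀ z : ℝ,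
      HasDerivAt dHc ((β : ℂ) * (2 * ((β : ℂ) * z + ε) * dHc z - 2 * n * Hc z)) z := by
    intro z
    have ha : HasDerivAt (fun y : ℝ => β * y + ε) β z := by
      simpa using ((hasDerivAt_id z).const_mul β).add_const ε
    have h := ((hasDerivAt_dPH n (β * z + ε)).comp z ha).ofReal_comp
    convert h using 1
    · rfl
    simp only [Hc, dHc]
    push_cast
    ring
  -- first application of `linOp`
  set F1 : ℝ → ℂ := fun y =>
    Complex.I * (β : ℂ) * ((β : ℂ) * y + ε) * Hc y - Complex.I * ((β : ℂ) * dHc y)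
    with hF1def
  have hPsi : PsiN α β δ ε κ μ n = fun y => C * Complex.exp (Gf α β δ ε κ y) * Hc y :=
    rfl
  have hlin1 : linOp α δ (PsiN α β δ ε κ μ n)
      = fun y => C * Complex.exp (Gf α β δ ε κ y) * F1 y := by
    funext y
    rw [hPsi, lin_eval α β δ ε κ C Hc ((β : ℂ) * dHc y) y (hHc y)]
  -- derivative of F1
  have hF1 : HasDerivAt F1
      (Complex.I * (β : ℂ) * ((β : ℂ) * Hc x + ((β : ℂ) * x + ε) * ((β : ℂ) * dHc x))
        - Complex.I * ((β : ℂ)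
          * ((β : ℂ) * (2 * ((β : ℂ) * x + ε) * dHc x - 2 * n * Hc x)))) x := by
    have hu : HasDerivAt (fun y : ℝ => (β : ℂ) * y + ε) (β : ℂ) x := by
      simpa using ((hx x).const_mul (β : ℂ)).add_const (ε : ℂ)
    have h1 : HasDerivAt (fun y : ℝ => Complex.I * (β : ℂ) * (((β : ℂ) * y + ε) * Hc y))
        (Complex.I * (β : ℂ)
          * ((β : ℂ) * Hc x + ((β : ℂ) * x + ε) * ((β : ℂ) * dHc x))) x :=
      (hu.mul (hHc x)).const_mul _
    have h2 : HasDerivAt (fun y : ℝ => Complex.I * ((β : ℂ) * dHc y))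
        (Complex.I * ((β : ℂ)
          * ((β : ℂ) * (2 * ((β : ℂ) * x + ε) * dHc x - 2 * n * Hc x)))) x :=
      ((hdHc x).const_mul (β : ℂ)).const_mul Complex.I
    have := h1.sub h2
    convert this using 2 with y
    · rfl
    · funext y; simp only [hF1def, Pi.sub_apply]; ring
  -- second application of `linOp`
  have hlin2 : linOp α δ (linOp α δ (PsiN α β δ ε κ μ n)) x
      = C * Complex.exp (Gf α β δ ε κ x)
        * (Complex.I * β * ((β : ℂ) * x + ε) * F1 x
          - Complex.I * (Complex.I * (β : ℂ)
              * ((β : ℂ) * Hc x + ((β : ℂ) * x + ε) * ((β : ℂ) * dHc x))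
            - Complex.I * ((β : ℂ)
              * ((β : ℂ) * (2 * ((β : ℂ) * x + ε) * dHc x - 2 * n * Hc x))))) := by
    rw [hlin1]
    exact lin_eval α β δ ε κ C F1 _ x hF1
  -- final algebra
  have hβ' : (β : ℂ) ≠ 0 := by
    exact_mod_cast (ne_of_gt hβ)
  have hI : (Complex.I) ^ 2 = -1 := Complex.I_sq
  have hBIG : Complex.I * β * ((β : ℂ) * x + ε) * F1 x
      - Complex.I * (Complex.I * (β : ℂ)
          * ((β : ℂ) * Hc x + ((β : ℂ) * x + ε) * ((β : ℂ) * dHc x))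
        - Complex.I * ((β : ℂ)
          * ((β : ℂ) * (2 * ((β : ℂ) * x + ε) * dHc x - 2 * n * Hc x))))
      = (β : ℂ) ^ 2 * ((2 * n + 1) * Hc x - ((β : ℂ) * x + ε) ^ 2 * Hc x) := by
    simp only [hF1def]
    linear_combination ((β : ℂ) ^ 2 * (((β : ℂ) * x + ε) ^ 2 - 2 * n - 1) * Hc x) * hI
  rw [show Einv α β δ ε lam (PsiN α β δ ε κ μ n) x
      = (lam / 2 : ℂ) * (linOp α δ (linOp α δ (PsiN α β δ ε κ μ n)) x / (β : ℂ) ^ 2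
        + ((β : ℂ) * x + ε) ^ 2 * PsiN α β δ ε κ μ n x) from rfl, hlin2, hBIG]
  simp only [hPsi]
  field_simp
  ring
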